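/- For n ≥ 4, let a(n) denote the number of states y : Fin n → ZMod 2 with no three cyclically consecutive 1s (no i with y_i = y_{i+1} = y_{i+2} = 1, indices mod n). Then for every n ≥ 7, the sequence satisfies the recurrence a(n) = a(n−1) + a(n−2) + a(n−3). -/

import Mathlib

abbrev S19 : Type := ZMod 2 × ZMod 2

def adj19 (s t : S19) : Prop := s.2 = t.1 ∧ ¬(s.1 = 1 ∧ s.2 = 1 ∧ t.2 = 1)

instance : ∀ s t, Decidable (adj19 s t) := fun s t => by unfold adj19; infer_instance

def pc19 : ℕ → S19 → S19 → ℕ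
  | 0, s, t => if s = t then 1 else 0
  | n+1, s, t => ∑ u : S19, if adj19 s u then pc19 n u t else 0

def LWp (n : ℕ) (s t : S19) (g : Fin (n+1) → S19) : Prop :=
  g 0 = s ∧ g (Fin.last n) = t ∧ ∀ k : Fin n, adj19 (g k.castSucc) (g k.succ)

instance (n : ℕ) (s t : S19) : DecidablePred (LWp n s t) := fun g => by
  unfold LWp; infer_instance

abbrev CWp (n : ℕ) (f : Fin (n+1) → S19) : Prop := ∀ i : Fin (n+1), adj19 (f i) (f (i+1))

-- E2 : cyclic walks with f 0 = s ≃ closed linear walks from s to s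
def E2 (m : ℕ) (s : S19) :
    {f : {f : Fin (m+1) → S19 // CWp m f} // f.1 0 = s} ≃
      {g : Fin (m+2) → S19 // LWp (m+1) s s g} where
  toFun f := ⟨Fin.snoc f.1.1 s, by
    show (Fin.snoc f.1.1 s : Fin (m+2) → S19) (Fin.castSucc 0) = s
    rw [Fin.snoc_castSucc]; exact f.2, by
    rw [Fin.snoc_last], by
    intro k
    rw [Fin.snoc_castSucc]
    induction k using Fin.lastCases with
    | last =>
      rw [show (Fin.last m).succ = Fin.last (m+1) from rfl, Fin.snoc_last]
      have := f.1.2 (Fin.last m)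
      rwa [Fin.last_add_one, f.2] at this
    | cast j =>
      rw [Fin.succ_castSucc, Fin.snoc_castSucc]
      have := f.1.2 j.castSucc
      rwa [Fin.coeSucc_eq_succ] at this⟩
  invFun g := ⟨⟨fun i => g.1 i.castSucc, by
    intro i
    induction i using Fin.lastCases with
    | last =>
      beta_reduce
      rw [Fin.last_add_one, Fin.castSucc_zero, g.2.1]
      have := g.2.2.2 (Fin.last m)
      rwa [show (Fin.last m).succ = Fin.last (m+1) from rfl, g.2.2.1] at this
    | cast j =>
      beta_reduce
      rw [Fin.coeSucc_eq_succ, ← Fin.succ_castSucc]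
      exact g.2.2.2 j.castSucc⟩, by
    show g.1 (Fin.castSucc 0) = s
    rw [Fin.castSucc_zero]; exact g.2.1⟩
  left_inv f := by
    apply Subtype.ext
    apply Subtype.ext
    funext i
    show (Fin.snoc f.1.1 s : Fin (m+2) → S19) i.castSucc = f.1.1 i
    rw [Fin.snoc_castSucc]
  right_inv g := by
    apply Subtype.ext
    funext i
    induction i using Fin.lastCases with
    | last =>
      show (Fin.snoc (fun i : Fin (m+1) => g.1 i.castSucc) s : Fin (m+2) → S19) (Fin.last (m+1)) = g.1 (Fin.last (m+1))
      rw [Fin.snoc_last, g.2.2.1]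
    | cast j =>
      show (Fin.snoc (fun i : Fin (m+1) => g.1 i.castSucc) s : Fin (m+2) → S19) j.castSucc = g.1 j.castSucc
      rw [Fin.snoc_castSucc]

-- EA : good cyclic states ≃ cyclic walks
def EA (m : ℕ) :
    {y : Fin (m+1) → ZMod 2 // ∀ i : Fin (m+1), ¬(y i = 1 ∧ y (i + 1) = 1 ∧ y (i + 2) = 1)} ≃
      {f : Fin (m+1) → S19 // CWp m f} where
  toFun y := ⟨fun i => (y.1 i, y.1 (i+1)), by
    intro i
    refine ⟨rfl, ?_⟩
    have h := y.2 i
    rw [show i + 2 = i + 1 + 1 by rw [add_assoc]; congr 1; ext; simp [Fin.val_add]] at h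
    simpa using h⟩
  invFun f := ⟨fun i => (f.1 i).1, by
    intro i
    have c1 : (f.1 i).2 = (f.1 (i+1)).1 := (f.2 i).1
    have c2 : (f.1 (i+1)).2 = (f.1 (i+2)).1 := by
      have := (f.2 (i+1)).1
      rwa [show i + 1 + 1 = i + 2 by rw [add_assoc]; congr 1; ext; simp [Fin.val_add]] at this
    have := (f.2 i).2
    show ¬((f.1 i).1 = 1 ∧ (f.1 (i+1)).1 = 1 ∧ (f.1 (i+2)).1 = 1)
    rwa [c1, c2] at this⟩
  left_inv y := by
    apply Subtype.ext; funext i; rfl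
  right_inv f := by
    apply Subtype.ext
    funext i
    have c1 : (f.1 i).2 = (f.1 (i+1)).1 := (f.2 i).1
    exact Prod.ext rfl c1.symm


lemma pc19_succ (n : ℕ) (s t : S19) :
    pc19 (n+1) s t = ∑ u : S19, if adj19 s u then pc19 n u t else 0 := rfl

lemma pc19_rec : ∀ n s t, pc19 (n+4) s t = pc19 (n+3) s t + pc19 (n+2) s t + pc19 (n+1) s t := by
  intro n
  induction n with
  | zero => decide
  | succ n ih =>
    intro s t
    have e4 : n+1+4 = (n+4)+1 := by omega
    have e3 : n+1+3 = (n+3)+1 := by omega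
    have e2 : n+1+2 = (n+2)+1 := by omega
    have e1 : n+1+1 = (n+1)+1 := by omega
    rw [e4, e3, e2, e1, pc19_succ, pc19_succ, pc19_succ, pc19_succ,
      ← Finset.sum_add_distrib, ← Finset.sum_add_distrib]
    apply Finset.sum_congr rfl
    intro u _
    split
    · rw [ih]
    · simp

lemma card_LW : ∀ n s t, Nat.card {g : Fin (n+1) → S19 // LWp n s t g} = pc19 n s t := by
  intro n
  induction n with
  | zero =>
    intro s t
    show _ = if s = t then 1 else 0
    rcases eq_or_ne s t with h | h
    · subst h
      rw [if_pos rfl]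
      have : Unique {g : Fin 1 → S19 // LWp 0 s s g} := by
        refine ⟨⟨⟨fun _ => s, rfl, rfl, fun k => k.elim0⟩⟩, ?_⟩
        rintro ⟨g, h0, _, _⟩
        apply Subtype.ext
        show g = fun _ => s
        funext i
        rw [Subsingleton.elim i 0, h0]
      rw [Nat.card_unique]
    · rw [if_neg h]
      have : IsEmpty {g : Fin 1 → S19 // LWp 0 s t g} := by
        constructor
        rintro ⟨g, h0, hl, _⟩
        exact h (h0 ▸ hl ▸ rfl)
      exact Nat.card_of_isEmpty
  | succ n ih =>
    intro s t
    have E0 : {g : Fin (n+2) → S19 // LWp (n+1) s t g} ≃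
        Σ u : S19, {g : {g : Fin (n+2) → S19 // LWp (n+1) s t g} // g.1 1 = u} :=
      (Equiv.sigmaFiberEquiv (fun g : {g : Fin (n+2) → S19 // LWp (n+1) s t g} => g.1 1)).symm
    have E1 : ∀ u : S19, {g : {g : Fin (n+2) → S19 // LWp (n+1) s t g} // g.1 1 = u} ≃
        PLift (adj19 s u) × {g : Fin (n+1) → S19 // LWp n u t g} := by
      intro u
      refine ⟨fun g => ⟨⟨?_⟩, ⟨Fin.tail g.1.1, ?_, ?_, ?_⟩⟩,
        fun p => ⟨⟨Fin.cons s p.2.1, rfl, ?_, ?_⟩, ?_⟩, ?_, ?_⟩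
      · obtain ⟨⟨g, h0, hl, hadj⟩, h1⟩ := g
        have := hadj 0
        rw [Fin.castSucc_zero, h0, Fin.succ_zero_eq_one] at this
        exact (h1 : g 1 = u) ▸ this
      · show g.1.1 1 = u
        exact g.2
      · show g.1.1 (Fin.last n).succ = t
        rw [Fin.succ_last]
        exact g.1.2.2.1
      · intro k
        have := g.1.2.2.2 k.succ
        rwa [← Fin.succ_castSucc] at this
      · rw [show Fin.last (n+1) = (Fin.last n).succ from rfl, Fin.cons_succ]
        exact p.2.2.2.1
      · intro k
        induction k using Fin.cases with
        | zero =>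
          rw [Fin.castSucc_zero, Fin.succ_zero_eq_one,
            show (1 : Fin (n+2)) = Fin.succ 0 from rfl, Fin.cons_succ, Fin.cons_zero, p.2.2.1]
          exact p.1.1
        | succ j =>
          rw [← Fin.succ_castSucc, Fin.cons_succ, Fin.cons_succ]
          exact p.2.2.2.2 j
      · exact (show (Fin.cons s p.2.1 : Fin (n+2) → S19) 1 = u by
          rw [show (1 : Fin (n+2)) = Fin.succ 0 from rfl, Fin.cons_succ]
          exact p.2.2.1)
      · rintro ⟨⟨g, h0, hl, hadj⟩, h1⟩
        apply Subtype.ext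
        apply Subtype.ext
        show Fin.cons s (Fin.tail g) = g
        rw [← h0, Fin.cons_self_tail]
      · rintro ⟨⟨hu⟩, ⟨g, h0, hl, hadj⟩⟩
        apply Prod.ext
        · rfl
        · apply Subtype.ext
          show Fin.tail (Fin.cons s g : Fin (n+2) → S19) = g
          exact Fin.tail_cons (α := fun _ : Fin (n+2) => S19) s g
    rw [Nat.card_eq_fintype_card, Fintype.card_congr E0, Fintype.card_sigma]
    show _ = ∑ u : S19, if adj19 s u then pc19 n u t else 0
    apply Finset.sum_congr rfl
    intro u _
    rw [Fintype.card_congr (E1 u), Fintype.card_prod]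
    rcases Classical.em (adj19 s u) with h | h
    · rw [if_pos h]
      haveI : Unique (PLift (adj19 s u)) := ⟨⟨⟨h⟩⟩, fun _ => rfl⟩
      rw [Fintype.card_unique, one_mul, ← Nat.card_eq_fintype_card, ih]
    · rw [if_neg h]
      haveI : IsEmpty (PLift (adj19 s u)) := ⟨fun p => h p.down⟩
      rw [Fintype.card_eq_zero, zero_mul]


lemma key19 (m : ℕ) :
    Nat.card {y : Fin (m + 1) → ZMod 2 |
        ∀ i : Fin (m + 1), ¬(y i = 1 ∧ y (i + 1) = 1 ∧ y (i + 2) = 1)} =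
      ∑ s : S19, pc19 (m+1) s s := by
  have h1 : Nat.card {f : Fin (m+1) → S19 // CWp m f} = ∑ s : S19, pc19 (m+1) s s := by
    rw [Nat.card_eq_fintype_card,
      Fintype.card_congr (Equiv.sigmaFiberEquiv (fun f : {f // CWp m f} => f.1 0)).symm,
      Fintype.card_sigma]
    apply Finset.sum_congr rfl
    intro s _
    rw [Fintype.card_congr (E2 m s), ← Nat.card_eq_fintype_card, card_LW]
  rw [← h1]
  exact Nat.card_congr (EA m)

/-- Let `a m` be the number of states `y : Fin m → ZMod 2` with no
three cyclically consecutive 1s (specified here for all `m ≥ 1`, hence in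
particular for all `m ≥ 4`). Then for every `n ≥ 7`,
`a n = a (n-1) + a (n-2) + a (n-3)`. -/
theorem stmt_19 (a : ℕ → ℕ)
    (ha : ∀ m : ℕ, a (m + 1) =
      Nat.card {y : Fin (m + 1) → ZMod 2 |
        ∀ i : Fin (m + 1), ¬(y i = 1 ∧ y (i + 1) = 1 ∧ y (i + 2) = 1)}) :
    ∀ n : ℕ, 7 ≤ n → a n = a (n - 1) + a (n - 2) + a (n - 3) := by
  intro n hn
  obtain ⟨k, rfl⟩ : ∃ k, n = k + 7 := ⟨n - 7, by omega⟩
  have key : ∀ m : ℕ, a (m + 1) = ∑ s : S19, pc19 (m+1) s s := by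
    intro m
    rw [ha m, key19 m]
  rw [show k + 7 = (k + 6) + 1 from by omega, show (k + 6) + 1 - 1 = (k + 5) + 1 from by omega,
    show (k + 6) + 1 - 2 = (k + 4) + 1 from by omega,
    show (k + 6) + 1 - 3 = (k + 3) + 1 from by omega, key, key, key, key,
    ← Finset.sum_add_distrib, ← Finset.sum_add_distrib]
  apply Finset.sum_congr rfl
  intro s _
  rw [show k + 6 + 1 = (k + 3) + 4 from by omega, show k + 5 + 1 = (k + 3) + 3 from by omega,
    show k + 4 + 1 = (k + 3) + 2 from by omega, show k + 3 + 1 = (k + 3) + 1 from rfl]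
  exact pc19_rec (k+3) s s
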